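/- Let a_1, ..., a_m ∈ ℝ^d with empty-circumsphere data (S, c, r) as before, and let y be in the relative interior of the convex hull of {a_j : j ∈ S}, where {a_j : j ∈ S} are affinely independent. Then the weighted ℓ1 program min Σ_j x_j ‖y - a_j‖² over feasible representations of y has a unique minimizer, namely the barycentric coordinate vector of y with respect to {a_j : j ∈ S} (extended by zeros). -/

import Mathlib

open Finset

theorem stmt_19 {d m : ℕ} (a : Fin m → EuclideanSpace ℝ (Fin d))
    (S : Finset (Fin m)) (c : EuclideanSpace ℝ (Fin d)) (r : ℝ) (hr : 0 < r)
    (hin : ∀ j ∈ S, ‖a j - c‖ = r) (hout : ∀ j ∉ S, r < ‖a j - c‖)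
    (ha : AffineIndependent ℝ (fun j : S => a j))
    (x' : Fin m → ℝ) (y : EuclideanSpace ℝ (Fin d))
    (hx'0 : ∀ j, 0 ≤ x' j) (hx's : ∑ j, x' j = 1)
    (hsupp' : ∀ j, x' j ≠ 0 ↔ j ∈ S)
    (hy : y = ∑ j, x' j • a j) :
    (∀ z : Fin m → ℝ, ((∀ j, 0 ≤ z j) ∧ ∑ j, z j = 1 ∧ ∑ j, z j • a j = y) →
      ∑ j, x' j * ‖y - a j‖ ^ 2 ≤ ∑ j, z j * ‖y - a j‖ ^ 2) ∧
    ∀ x : Fin m → ℝ,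
      ((∀ j, 0 ≤ x j) ∧ ∑ j, x j = 1 ∧ ∑ j, x j • a j = y) →
      (∀ z : Fin m → ℝ, ((∀ j, 0 ≤ z j) ∧ ∑ j, z j = 1 ∧ ∑ j, z j • a j = y) →
        ∑ j, x j * ‖y - a j‖ ^ 2 ≤ ∑ j, z j * ‖y - a j‖ ^ 2) →
      x = x' := by
  -- Key identity: for any feasible z,
  -- ∑ z j * ‖y - a j‖² = ∑ z j * ‖a j - c‖² - ‖y - c‖²
  have key : ∀ z : Fin m → ℝ, (∑ j, z j = 1) → (∑ j, z j • a j = y) →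
      ∑ j, z j * ‖y - a j‖ ^ 2 = ∑ j, z j * ‖a j - c‖ ^ 2 - ‖y - c‖ ^ 2 := by
    intro z hz1 hz2
    have hsub : ∑ j, z j • (a j - c) = y - c := by
      simp only [smul_sub]
      rw [Finset.sum_sub_distrib, hz2, ← Finset.sum_smul, hz1, one_smul]
    have hinner : ∑ j, z j * (inner ℝ (y - c) (a j - c) : ℝ) = ‖y - c‖ ^ 2 := by
      have : (inner ℝ (y - c) (∑ j, z j • (a j - c)) : ℝ)
          = ∑ j, z j * (inner ℝ (y - c) (a j - c) : ℝ) := by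
        rw [inner_sum]
        simp only [real_inner_smul_right]
      rw [← this, hsub, real_inner_self_eq_norm_sq]
    have hexp : ∀ j, ‖y - a j‖ ^ 2
        = ‖y - c‖ ^ 2 - 2 * (inner ℝ (y - c) (a j - c) : ℝ) + ‖a j - c‖ ^ 2 := by
      intro j
      have h1 : y - a j = (y - c) - (a j - c) := by abel
      rw [h1, @norm_sub_sq_real]
    calc ∑ j, z j * ‖y - a j‖ ^ 2
        = ∑ j, (z j * ‖y - c‖ ^ 2 - 2 * (z j * (inner ℝ (y - c) (a j - c) : ℝ))
            + z j * ‖a j - c‖ ^ 2) := by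
          apply Finset.sum_congr rfl
          intro j _
          rw [hexp j]; ring
      _ = (∑ j, z j) * ‖y - c‖ ^ 2 - 2 * (∑ j, z j * (inner ℝ (y - c) (a j - c) : ℝ))
            + ∑ j, z j * ‖a j - c‖ ^ 2 := by
          rw [Finset.sum_add_distrib, Finset.sum_sub_distrib, ← Finset.sum_mul,
            ← Finset.mul_sum]
      _ = ∑ j, z j * ‖a j - c‖ ^ 2 - ‖y - c‖ ^ 2 := by
          rw [hz1, hinner]; ring
  -- each ‖a j - c‖² ≥ r², equality on S, strict off S
  have hge : ∀ j, r ^ 2 ≤ ‖a j - c‖ ^ 2 := by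
    intro j
    by_cases hj : j ∈ S
    · rw [hin j hj]
    · nlinarith [hout j hj]
  have hval' : ∑ j, x' j * ‖a j - c‖ ^ 2 = r ^ 2 := by
    have : ∀ j ∈ Finset.univ, x' j * ‖a j - c‖ ^ 2 = x' j * r ^ 2 := by
      intro j _
      by_cases hj : j ∈ S
      · rw [hin j hj]
      · have : x' j = 0 := by
          by_contra h; exact hj ((hsupp' j).mp h)
        simp [this]
    rw [Finset.sum_congr rfl this, ← Finset.sum_mul, hx's, one_mul]
  have hlow : ∀ z : Fin m → ℝ, (∀ j, 0 ≤ z j) → (∑ j, z j = 1) →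
      r ^ 2 ≤ ∑ j, z j * ‖a j - c‖ ^ 2 := by
    intro z hz0 hz1
    calc r ^ 2 = ∑ j, z j * r ^ 2 := by rw [← Finset.sum_mul, hz1, one_mul]
      _ ≤ ∑ j, z j * ‖a j - c‖ ^ 2 :=
        Finset.sum_le_sum fun j _ => mul_le_mul_of_nonneg_left (hge j) (hz0 j)
  have hyfeas : ∑ j, x' j • a j = y := hy.symm
  constructor
  · intro z ⟨hz0, hz1, hz2⟩
    rw [key x' hx's hyfeas, key z hz1 hz2, hval']
    have := hlow z hz0 hz1
    linarith
  · intro x ⟨hx0, hx1, hx2⟩ hmin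
    -- x is supported on S
    have hle := hmin x' ⟨hx'0, hx's, hyfeas⟩
    rw [key x hx1 hx2, key x' hx's hyfeas, hval'] at hle
    have hsum_le : ∑ j, x j * ‖a j - c‖ ^ 2 ≤ r ^ 2 := by linarith
    have hzero : ∀ j ∉ S, x j = 0 := by
      intro j hj
      by_contra hxj
      have hxjpos : 0 < x j := lt_of_le_of_ne (hx0 j) (Ne.symm hxj)
      have hstrict : r ^ 2 < ‖a j - c‖ ^ 2 := by nlinarith [hout j hj]
      have h1 : ∑ i, x i * r ^ 2 < ∑ i, x i * ‖a i - c‖ ^ 2 := by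
        apply Finset.sum_lt_sum
        · intro i _
          exact mul_le_mul_of_nonneg_left (hge i) (hx0 i)
        · exact ⟨j, Finset.mem_univ j, by
            exact mul_lt_mul_of_pos_left hstrict hxjpos⟩
      rw [← Finset.sum_mul, hx1, one_mul] at h1
      linarith
    have hzero' : ∀ j ∉ S, x' j = 0 := by
      intro j hj
      by_contra h; exact hj ((hsupp' j).mp h)
    -- uniqueness via affine independence
    have hS1 : ∀ (w : Fin m → ℝ), (∀ j ∉ S, w j = 0) → (∑ j, w j = 1) →
        ∑ i : S, w i = 1 := by
      intro w hw0 hw1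
      rw [Finset.sum_coe_sort S w, Finset.sum_subset (Finset.subset_univ S)
        (fun j _ hj => hw0 j hj), hw1]
    have hScomb : ∀ (w : Fin m → ℝ), (∀ j ∉ S, w j = 0) → (∑ j, w j • a j = y) →
        ∑ i : S, w i • a i = y := by
      intro w hw0 hw2
      rw [Finset.sum_coe_sort S (fun j => w j • a j), Finset.sum_subset
        (Finset.subset_univ S) (fun j _ hj => by rw [hw0 j hj, zero_smul]), hw2]
    have hx1S := hS1 x hzero hx1
    have hx'1S := hS1 x' hzero' hx's
    have hxcS := hScomb x hzero hx2
    have hx'cS := hScomb x' hzero' hyfeas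
    have heq : (fun i : S => x i) = (fun i : S => x' i) := by
      rw [affineIndependent_iff_eq_of_fintype_affineCombination_eq] at ha
      apply ha _ _ hx1S hx'1S
      rw [Finset.univ.affineCombination_eq_linear_combination _ _ hx1S,
        Finset.univ.affineCombination_eq_linear_combination _ _ hx'1S,
        hxcS, hx'cS]
    funext j
    by_cases hj : j ∈ S
    · exact congrFun heq ⟨j, hj⟩
    · rw [hzero j hj, hzero' j hj]
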